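/- Let C be a congruence on the semigroup I^cf_λ. If there exist two elements α, β of I^cf_λ that are not Green's H-equivalent (i.e., dom α ≠ dom β or ran α ≠ ran β) and satisfy α C β, then C is a group congruence on I^cf_λ, i.e., the quotient semigroup I^cf_λ/C is a group. -/

import Mathlib

open Function Set

namespace IcfPaper

variable {ι : Type*}

lemma trans_none_finite {f g : ι ≃. ι}
    (hf : {a | f a = none}.Finite) (hg : {b | g b = none}.Finite) :
    {a | (f.trans g) a = none}.Finite := by
  have hsub : {a | (f.trans g) a = none} ⊆
      {a | f a = none} ∪ ⋃ b ∈ {b | g b = none}, {a | f.symm b = some a} := by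
    intro a ha
    simp only [Set.mem_setOf_eq] at ha
    rcases hfa : f a with _ | b
    · exact Or.inl hfa
    · have hg' : g b = none := by
        have : (f.trans g) a = (f a).bind g := rfl
        rw [this, hfa] at ha
        exact ha
      refine Or.inr ?_
      refine Set.mem_biUnion hg' ?_
      exact (PEquiv.eq_some_iff f).2 hfa
  refine Set.Finite.subset (hf.union (hg.biUnion ?_)) hsub
  intro b _
  apply Set.Subsingleton.finite
  intro a1 h1 a2 h2
  simp only [Set.mem_setOf_eq] at h1 h2
  rw [h1] at h2
  exact Option.some_injective _ h2

/-- The monoid of injective partial selfmaps of `ι` with cofinite domain and range. -/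
def Icf (ι : Type*) : Type _ :=
  {f : ι ≃. ι // {a | f a = none}.Finite ∧ {b | f.symm b = none}.Finite}

namespace Icf

instance : Monoid (Icf ι) where
  mul f g := ⟨f.1.trans g.1, trans_none_finite f.2.1 g.2.1, by
      rw [PEquiv.symm_trans_rev]
      exact trans_none_finite g.2.2 f.2.2⟩
  one := ⟨PEquiv.refl ι, by
      constructor <;>
      · convert Set.finite_empty
        ext a
        simp only [Set.mem_setOf_eq, Set.mem_empty_iff_false, iff_false]
        intro h
        exact Option.some_ne_none a h⟩
  mul_assoc a b c := Subtype.ext (PEquiv.trans_assoc _ _ _)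
  one_mul a := Subtype.ext (PEquiv.refl_trans _)
  mul_one a := Subtype.ext (PEquiv.trans_refl _)

/-- The domain of an element of `Icf ι`. -/
def dom (f : Icf ι) : Set ι := {a | (f.1 a).isSome}

/-- The range of an element of `Icf ι`. -/
def ran (f : Icf ι) : Set ι := {b | (f.1.symm b).isSome}

/-- `d̄ f`, the number of points of `ι` outside of the domain of `f`. -/
noncomputable def dbar (f : Icf ι) : ℕ := (dom f)ᶜ.ncard

/-- `r̄ f`, the number of points of `ι` outside of the range of `f`. -/
noncomputable def rbar (f : Icf ι) : ℕ := (ran f)ᶜ.ncard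

end Icf

/-- The bicyclic semigroup `⟨p, q | pq = 1⟩`, realized as `ℕ × ℕ` with the operation
`(a,b)(c,d) = (a - b + max(b,c), d - c + max(b,c))`. -/
def Bicyclic : Type := ℕ × ℕ

instance : Mul Bicyclic :=
  ⟨fun x y => (x.1 - x.2 + max x.2 y.1, y.2 - y.1 + max x.2 y.1)⟩


section Proof

open PEquiv

/-! ### Basic lemmas about `PEquiv.ofSet` -/

lemma trans_apply' (f g : ι ≃. ι) (a : ι) : (f.trans g) a = (f a).bind g := rfl

lemma ofSet_apply_of_mem {S : Set ι} [DecidablePred (· ∈ S)] {a : ι} (h : a ∈ S) :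
    PEquiv.ofSet S a = some a := PEquiv.ofSet_eq_some_self_iff.2 h

lemma ofSet_apply_of_not_mem {S : Set ι} [DecidablePred (· ∈ S)] {a : ι} (h : a ∉ S) :
    PEquiv.ofSet S a = none := by
  rcases hE : PEquiv.ofSet S a with _ | b
  · rfl
  · rcases PEquiv.ofSet_eq_some_iff.1 hE with ⟨rfl, hmem⟩
    exact absurd hmem h

namespace Icf

lemma mul_def (f g : Icf ι) : (f * g).1 = f.1.trans g.1 := rfl

lemma one_def : (1 : Icf ι).1 = PEquiv.refl ι := rfl

/-- The inverse of an element of `Icf`. -/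
def inv' (f : Icf ι) : Icf ι :=
  ⟨f.1.symm, f.2.2, by rw [PEquiv.symm_symm]; exact f.2.1⟩

lemma domFin (f : Icf ι) : {a | (f.1 a).isSome}ᶜ.Finite := by
  have hset : {a | (f.1 a).isSome}ᶜ = {a | f.1 a = none} := by
    ext a
    simp [Option.not_isSome_iff_eq_none]
  rw [hset]
  exact f.2.1

lemma ranFin (f : Icf ι) : {b | (f.1.symm b).isSome}ᶜ.Finite := by
  have hset : {b | (f.1.symm b).isSome}ᶜ = {b | f.1.symm b = none} := by
    ext b
    simp [Option.not_isSome_iff_eq_none]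
  rw [hset]
  exact f.2.2

/-- The idempotent of `Icf ι` given by the partial identity on a cofinite set. -/
noncomputable def eIcf (S : Set ι) (h : Sᶜ.Finite) : Icf ι :=
  ⟨@PEquiv.ofSet ι S (Classical.decPred _), by
    have hset : {a | @PEquiv.ofSet ι S (Classical.decPred _) a = none} = Sᶜ := by
      ext a
      simp only [Set.mem_setOf_eq, Set.mem_compl_iff]
      constructor
      · intro h1 hmem
        rw [@ofSet_apply_of_mem ι S (Classical.decPred _) a hmem] at h1
        exact Option.some_ne_none _ h1
      · exact @ofSet_apply_of_not_mem ι S (Classical.decPred _) a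
    constructor
    · rw [hset]; exact h
    · rw [PEquiv.ofSet_symm, hset]; exact h⟩

lemma eIcf_fst (S : Set ι) (h : Sᶜ.Finite) :
    (eIcf S h).1 = @PEquiv.ofSet ι S (Classical.decPred _) := rfl

lemma eIcf_apply_of_mem (S : Set ι) (h : Sᶜ.Finite) {a : ι} (hm : a ∈ S) :
    (eIcf S h).1 a = some a := @ofSet_apply_of_mem ι S (Classical.decPred _) a hm

lemma eIcf_apply_of_not_mem (S : Set ι) (h : Sᶜ.Finite) {a : ι} (hm : a ∉ S) :
    (eIcf S h).1 a = none := @ofSet_apply_of_not_mem ι S (Classical.decPred _) a hm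

lemma eIcf_congr {S T : Set ι} (hST : S = T) (hS : Sᶜ.Finite) (hT : Tᶜ.Finite) :
    eIcf S hS = eIcf T hT := by subst hST; rfl

lemma eIcf_univ (h : (Set.univ : Set ι)ᶜ.Finite) : eIcf Set.univ h = 1 := by
  apply Subtype.ext
  refine PEquiv.ext fun a => ?_
  rw [eIcf_apply_of_mem _ _ (Set.mem_univ a), one_def, PEquiv.refl_apply]

lemma ofSet_irrel (S : Set ι) (i1 i2 : DecidablePred (· ∈ S)) :
    @PEquiv.ofSet ι S i1 = @PEquiv.ofSet ι S i2 := by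
  ext a
  by_cases hm : a ∈ S
  · rw [@ofSet_apply_of_mem ι S i1 a hm, @ofSet_apply_of_mem ι S i2 a hm]
  · rw [@ofSet_apply_of_not_mem ι S i1 a hm, @ofSet_apply_of_not_mem ι S i2 a hm]

lemma mul_inv' (f : Icf ι) : f * inv' f = eIcf {a | (f.1 a).isSome} (domFin f) := by
  apply Subtype.ext
  rw [mul_def, eIcf_fst]
  show f.1.trans f.1.symm = _
  rw [PEquiv.self_trans_symm]
  exact ofSet_irrel _ _ _

lemma inv'_mul (f : Icf ι) : inv' f * f = eIcf {b | (f.1.symm b).isSome} (ranFin f) := by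
  apply Subtype.ext
  rw [mul_def, eIcf_fst]
  show f.1.symm.trans f.1 = _
  rw [PEquiv.symm_trans_self]
  exact ofSet_irrel _ _ _

lemma eIcf_mul {S : Set ι} (h : Sᶜ.Finite) (f : Icf ι) (hdom : ∀ a, a ∉ S → f.1 a = none) :
    eIcf S h * f = f := by
  apply Subtype.ext
  refine PEquiv.ext fun a => ?_
  rw [mul_def, trans_apply']
  by_cases hm : a ∈ S
  · rw [eIcf_apply_of_mem _ _ hm, Option.bind_some]
  · rw [eIcf_apply_of_not_mem _ _ hm, Option.bind_none, hdom a hm]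

lemma mul_eIcf {S : Set ι} (h : Sᶜ.Finite) (f : Icf ι) (hran : ∀ a b, f.1 a = some b → b ∈ S) :
    f * eIcf S h = f := by
  apply Subtype.ext
  refine PEquiv.ext fun a => ?_
  rw [mul_def, trans_apply']
  rcases hfa : f.1 a with _ | b
  · rw [Option.bind_none]
  · rw [Option.bind_some, eIcf_apply_of_mem _ _ (hran a b hfa)]

lemma eIcf_mul_eIcf {S T : Set ι} (hS : Sᶜ.Finite) (hT : Tᶜ.Finite) :
    eIcf S hS * eIcf T hT =
      eIcf (S ∩ T) (by rw [Set.compl_inter]; exact hS.union hT) := by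
  apply Subtype.ext
  refine PEquiv.ext fun a => ?_
  rw [mul_def, trans_apply']
  by_cases hmS : a ∈ S
  · rw [eIcf_apply_of_mem _ _ hmS, Option.bind_some]
    by_cases hmT : a ∈ T
    · rw [eIcf_apply_of_mem _ _ hmT, eIcf_apply_of_mem _ _ (Set.mem_inter hmS hmT)]
    · rw [eIcf_apply_of_not_mem _ _ hmT,
        eIcf_apply_of_not_mem _ _ (fun hin => hmT hin.2)]
  · rw [eIcf_apply_of_not_mem _ _ hmS, Option.bind_none,
      eIcf_apply_of_not_mem _ _ (fun hin => hmS hin.1)]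

lemma mul_inv'_mul (f : Icf ι) : f * inv' f * f = f := by
  apply Subtype.ext
  refine PEquiv.ext fun a => ?_
  show (((f.1 a).bind f.1.symm).bind f.1) = f.1 a
  rcases hfa : f.1 a with _ | b
  · rfl
  · have h2 : f.1.symm b = some a := (PEquiv.eq_some_iff f.1).2 hfa
    rw [Option.bind_some, h2, Option.bind_some, hfa]

/-! ### Permutations as elements of `Icf` -/

/-- A permutation of `ι` as an element of `Icf ι`. -/
def ofPerm (g : Equiv.Perm ι) : Icf ι :=
  ⟨g.toPEquiv, by
    constructor
    · convert Set.finite_empty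
      ext a
      simp [Equiv.toPEquiv_apply]
    · convert Set.finite_empty
      ext a
      simp [← Equiv.toPEquiv_symm, Equiv.toPEquiv_apply]⟩

lemma ofPerm_mul_inv' (g : Equiv.Perm ι) : ofPerm g * inv' (ofPerm g) = 1 := by
  apply Subtype.ext
  rw [mul_def, one_def]
  show g.toPEquiv.trans g.toPEquiv.symm = _
  rw [← Equiv.toPEquiv_symm, ← Equiv.toPEquiv_trans, Equiv.self_trans_symm,
    Equiv.toPEquiv_refl]

lemma ofPerm_conj {S : Set ι} (g : Equiv.Perm ι) (hS : Sᶜ.Finite) :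
    ofPerm g * eIcf S hS * inv' (ofPerm g) =
      eIcf (g ⁻¹' S) (by
        rw [← Set.preimage_compl]
        exact hS.preimage (g.injective.injOn)) := by
  apply Subtype.ext
  refine PEquiv.ext fun a => ?_
  rw [mul_def, mul_def, trans_apply', trans_apply']
  rw [show (ofPerm g).1 = g.toPEquiv from rfl, Equiv.toPEquiv_apply, Option.bind_some]
  by_cases hm : g a ∈ S
  · rw [eIcf_apply_of_mem _ _ hm, Option.bind_some,
      eIcf_apply_of_mem _ _ (Set.mem_preimage.2 hm)]
    show g.toPEquiv.symm (g a) = some a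
    rw [← Equiv.toPEquiv_symm, Equiv.toPEquiv_apply, Equiv.symm_apply_apply]
  · rw [eIcf_apply_of_not_mem _ _ hm, Option.bind_none,
      eIcf_apply_of_not_mem _ _ (fun hin => hm (Set.mem_preimage.1 hin))]

/-! ### A bijection onto a cofinite set, as an element of `Icf` -/

/-- An equivalence of `ι` with a subset `A`, as a partial equivalence of `ι`. -/
noncomputable def subPE {A : Set ι} (e : ι ≃ A) : ι ≃. ι where
  toFun a := some ((e a : ι))
  invFun b := @dite _ (b ∈ A) (Classical.dec _) (fun h => some (e.symm ⟨b, h⟩)) (fun _ => none)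
  inv a b := by
    by_cases h : b ∈ A
    · rw [dif_pos h]
      constructor
      · rintro hba
        have : e.symm ⟨b, h⟩ = a := Option.some_injective _ hba
        rw [← this, Equiv.apply_symm_apply]
      · intro hab
        have hb : (e a : ι) = b := Option.some_injective _ hab
        have : e a = ⟨b, h⟩ := Subtype.ext hb
        rw [← this, Equiv.symm_apply_apply]
    · rw [dif_neg h]
      constructor
      · intro hf; cases hf
      · intro hab
        have hb : (e a : ι) = b := Option.some_injective _ hab
        exact absurd (hb ▸ (e a).2) h

lemma subPE_apply {A : Set ι} (e : ι ≃ A) (a : ι) : subPE e a = some ((e a : ι)) := rfl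

lemma subPE_symm_apply_of_mem {A : Set ι} (e : ι ≃ A) {b : ι} (h : b ∈ A) :
    (subPE e).symm b = some (e.symm ⟨b, h⟩) := dif_pos h

lemma subPE_symm_apply_of_not_mem {A : Set ι} (e : ι ≃ A) {b : ι} (h : b ∉ A) :
    (subPE e).symm b = none := dif_neg h

/-- `subPE` as an element of `Icf`. -/
noncomputable def sIcf {A : Set ι} (e : ι ≃ A) (hA : Aᶜ.Finite) : Icf ι :=
  ⟨subPE e, by
    constructor
    · convert Set.finite_empty
      ext a
      simp [subPE_apply]
    · refine hA.subset ?_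
      intro b hb
      simp only [Set.mem_setOf_eq] at hb
      simp only [Set.mem_compl_iff]
      intro hmem
      rw [subPE_symm_apply_of_mem e hmem] at hb
      exact Option.some_ne_none _ hb⟩

lemma sIcf_mul_inv' {A : Set ι} (e : ι ≃ A) (hA : Aᶜ.Finite) :
    sIcf e hA * inv' (sIcf e hA) = 1 := by
  apply Subtype.ext
  refine PEquiv.ext fun a => ?_
  rw [mul_def, trans_apply']
  show ((subPE e) a).bind (subPE e).symm = PEquiv.refl ι a
  rw [subPE_apply, Option.bind_some, subPE_symm_apply_of_mem e (e a).2,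
    PEquiv.refl_apply]
  congr 1
  rw [Subtype.coe_eta, Equiv.symm_apply_apply]

lemma sIcf_mul_eIcf {A : Set ι} (e : ι ≃ A) (hA : Aᶜ.Finite) :
    sIcf e hA * eIcf A hA = sIcf e hA := by
  refine mul_eIcf hA _ (fun a b hb => ?_)
  have : ((e a : ι)) = b := Option.some_injective _ hb
  exact this ▸ (e a).2

end Icf

open Icf

/-- Existence of an equivalence between `ι` and a cofinite subset. -/
lemma equiv_of_cofinite [Infinite ι] {A : Set ι} (hA : Aᶜ.Finite) : Nonempty (ι ≃ A) := by
  have hinf : A.Infinite := by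
    have := hA.infinite_compl
    rwa [compl_compl] at this
  have h1 : Cardinal.mk ↥A + Cardinal.mk ↥(Aᶜ) = Cardinal.mk ι := Cardinal.mk_sum_compl A
  have h2 : Cardinal.mk ↥(Aᶜ) < Cardinal.aleph0 := hA.lt_aleph0
  have h3 : Cardinal.aleph0 ≤ Cardinal.mk ↥A := by
    haveI := hinf.to_subtype
    exact Cardinal.infinite_iff.1 inferInstance
  have hAe : Cardinal.mk ↥A = Cardinal.mk ι := by
    rw [← h1, Cardinal.add_eq_left h3 (le_trans h2.le h3)]
  exact ⟨(Cardinal.eq.1 hAe).some.symm⟩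

variable {c : Con (Icf ι)}

/-- From `c 1 η` we get that `η⁻¹` is congruent to `1`. -/
lemma inv'_rel_one {η : Icf ι} (h1 : c 1 η) : c (inv' η) 1 := by
  have h2 : c (inv' η) (η * inv' η) := by
    have := c.mul h1 (c.refl (inv' η))
    rwa [one_mul] at this
  have h4 : c (inv' η) η := by
    have h5 := c.mul h2 h1
    rwa [mul_one, mul_inv'_mul] at h5
  exact c.trans h4 (c.symm h1)

lemma idem_rel_one {η : Icf ι} (h1 : c 1 η) :
    c (η * inv' η) 1 ∧ c (inv' η * η) 1 := by
  have h5 := inv'_rel_one h1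
  constructor
  · have := c.mul (c.symm h1) h5
    rwa [one_mul] at this
  · have := c.mul h5 (c.symm h1)
    rwa [one_mul] at this

/-- Main reduction: if a partial identity on a cofinite set `A` is `c`-related to a map `τ`
undefined (or not attained) at some `x ∈ A`, then some partial identity with a hole is
`c`-related to `1`. -/
lemma exists_hole [Infinite ι] {A : Set ι} (hA : Aᶜ.Finite) {τ : Icf ι}
    {x : ι} (hx : x ∈ A) (hrel : c (eIcf A hA) τ)
    (hτ : τ.1 x = none ∨ τ.1.symm x = none) :
    ∃ (S : Set ι) (hS : Sᶜ.Finite) (y : ι), y ∉ S ∧ c (eIcf S hS) 1 := by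
  obtain ⟨e⟩ := equiv_of_cofinite hA
  have h1 : c 1 (sIcf e hA * τ * inv' (sIcf e hA)) := by
    have h0 := c.mul (c.mul (c.refl (sIcf e hA)) hrel) (c.refl (inv' (sIcf e hA)))
    rwa [sIcf_mul_eIcf, sIcf_mul_inv'] at h0
  set η := sIcf e hA * τ * inv' (sIcf e hA) with hη_def
  set y := e.symm ⟨x, hx⟩ with hy_def
  have hsy : (sIcf e hA).1 y = some x := by
    show subPE e y = some x
    rw [subPE_apply]
    congr 1
    show ((e (e.symm ⟨x, hx⟩) : A) : ι) = x
    rw [Equiv.apply_symm_apply]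
  obtain ⟨hE, hE'⟩ := idem_rel_one h1
  rcases hτ with hd | hr
  · have hyn : η.1 y = none := by
      show (((sIcf e hA).1.trans τ.1).trans (sIcf e hA).1.symm) y = none
      rw [trans_apply', trans_apply', hsy, Option.bind_some, hd, Option.bind_none]
    refine ⟨{a | (η.1 a).isSome}, domFin η, y, ?_, ?_⟩
    · simp [Set.mem_setOf_eq, hyn]
    · rw [mul_inv' η] at hE
      exact hE
  · have hyn : η.1.symm y = none := by
      show (((sIcf e hA).1.trans τ.1).trans (sIcf e hA).1.symm).symm y = none
      rw [PEquiv.symm_trans_rev, PEquiv.symm_symm, trans_apply', hsy, Option.bind_some,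
        PEquiv.symm_trans_rev, trans_apply', hr, Option.bind_none]
    refine ⟨{b | (η.1.symm b).isSome}, ranFin η, y, ?_, ?_⟩
    · simp [Set.mem_setOf_eq, hyn]
    · rw [inv'_mul η] at hE'
      exact hE'

lemma singleton_compl_finite (z : ι) : (({z}ᶜ : Set ι))ᶜ.Finite := by
  rw [compl_compl]
  exact Set.finite_singleton z

/-- Moving the hole: from one partial identity with a hole related to `1`, all
single-hole partial identities are related to `1`. -/
lemma hole_anywhere {S : Set ι} {hS : Sᶜ.Finite} {y : ι}
    (hy : y ∉ S) (h : c (eIcf S hS) 1) (z : ι) :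
    c (eIcf {z}ᶜ (singleton_compl_finite z)) 1 := by
  classical
  have hpre : ((Equiv.swap y z) ⁻¹' S)ᶜ.Finite := by
    rw [← Set.preimage_compl]
    exact hS.preimage ((Equiv.swap y z).injective.injOn)
  have h1 : c (eIcf ((Equiv.swap y z) ⁻¹' S) hpre) 1 := by
    have h0 := c.mul (c.mul (c.refl (ofPerm (Equiv.swap y z))) h)
      (c.refl (inv' (ofPerm (Equiv.swap y z))))
    rw [ofPerm_conj (Equiv.swap y z) hS, mul_one, ofPerm_mul_inv'] at h0
    exact h0
  have hzmem : z ∉ (Equiv.swap y z) ⁻¹' S := by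
    intro hmem
    rw [Set.mem_preimage, Equiv.swap_apply_right] at hmem
    exact hy hmem
  have hsub : (Equiv.swap y z) ⁻¹' S ⊆ {z}ᶜ := by
    intro w hw hwz
    rw [Set.mem_singleton_iff] at hwz
    exact hzmem (hwz ▸ hw)
  have h2 : eIcf ({z}ᶜ) (singleton_compl_finite z) * eIcf ((Equiv.swap y z) ⁻¹' S) hpre
      = eIcf ((Equiv.swap y z) ⁻¹' S) hpre := by
    rw [eIcf_mul_eIcf]
    exact eIcf_congr (Set.inter_eq_self_of_subset_right hsub) _ _
  have h3 := c.mul (c.refl (eIcf ({z}ᶜ) (singleton_compl_finite z))) h1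
  rw [h2, mul_one] at h3
  exact c.trans (c.symm h3) h1

/-- All cofinite partial identities are related to `1`. -/
lemma all_idem_rel_one
    (hz : ∀ z : ι, c (eIcf {z}ᶜ (singleton_compl_finite z)) 1)
    (S : Set ι) (hS : Sᶜ.Finite) : c (eIcf S hS) 1 := by
  classical
  have hmain : ∀ (F : Finset ι) (hF : ((↑F : Set ι)ᶜ)ᶜ.Finite), c (eIcf (↑F : Set ι)ᶜ hF) 1 := by
    intro F
    induction F using Finset.induction_on with
    | empty =>
      intro hF
      have he : ((↑(∅ : Finset ι) : Set ι))ᶜ = (Set.univ : Set ι) := by simp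
      have hu : (Set.univ : Set ι)ᶜ.Finite := by rw [← he]; exact hF
      rw [eIcf_congr he hF hu, eIcf_univ]
      exact c.refl 1
    | @insert a F ha ih =>
      intro hF
      have hsets : ((↑(insert a F) : Set ι))ᶜ = {a}ᶜ ∩ (↑F : Set ι)ᶜ := by
        rw [Finset.coe_insert, Set.insert_eq, Set.compl_union]
      have hFc : ((↑F : Set ι)ᶜ)ᶜ.Finite := by
        rw [compl_compl]; exact F.finite_toSet
      have hinter : (({a}ᶜ ∩ (↑F : Set ι)ᶜ : Set ι))ᶜ.Finite := by
        rw [← hsets]; exact hF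
      have hprod := c.mul (hz a) (ih hFc)
      rw [one_mul, eIcf_mul_eIcf] at hprod
      rw [eIcf_congr hsets hF hinter]
      exact hprod
  have hSS : S = ((↑hS.toFinset : Set ι))ᶜ := by
    rw [Set.Finite.coe_toFinset, compl_compl]
  have hS2 : (((↑hS.toFinset : Set ι))ᶜ)ᶜ.Finite := by rw [← hSS]; exact hS
  rw [eIcf_congr hSS hS hS2]
  exact hmain _ _

end Proof

open Icf in
/-- If a congruence on `Icf ι` identifies two non-`H`-equivalent elements, then it is a
group congruence. -/
theorem statement13 {ι : Type*} [Infinite ι] (c : Con (Icf ι))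
    (h : ∃ α β : Icf ι, c α β ∧ ¬(Icf.dom α = Icf.dom β ∧ Icf.ran α = Icf.ran β)) :
    ∀ x : c.Quotient, ∃ y : c.Quotient, x * y = 1 ∧ y * x = 1 := by
  classical
  obtain ⟨α, β, hαβ, hne⟩ := h
  have main : ∀ γ δ : Icf ι, c γ δ →
      ((∃ x, x ∈ Icf.dom γ ∧ x ∉ Icf.dom δ) ∨ (∃ x, x ∈ Icf.ran γ ∧ x ∉ Icf.ran δ)) →
      ∃ (S : Set ι) (hS : Sᶜ.Finite) (y : ι), y ∉ S ∧ c (eIcf S hS) 1 := by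
    rintro γ δ hc (⟨x, hx1, hx2⟩ | ⟨x, hx1, hx2⟩)
    · have hδx : δ.1 x = none := Option.not_isSome_iff_eq_none.1 hx2
      have hx1' : x ∈ {a | (γ.1 a).isSome} := hx1
      have hrel : c (eIcf {a | (γ.1 a).isSome} (domFin γ)) (δ * inv' γ) := by
        have h0 := c.mul hc (c.refl (inv' γ))
        rwa [mul_inv' γ] at h0
      refine exists_hole (domFin γ) hx1' hrel (Or.inl ?_)
      show (δ.1.trans γ.1.symm) x = none
      rw [trans_apply', hδx, Option.bind_none]
    · have hδx : δ.1.symm x = none := Option.not_isSome_iff_eq_none.1 hx2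
      have hx1' : x ∈ {b | (γ.1.symm b).isSome} := hx1
      have hrel : c (eIcf {b | (γ.1.symm b).isSome} (ranFin γ)) (inv' γ * δ) := by
        have h0 := c.mul (c.refl (inv' γ)) hc
        rwa [inv'_mul γ] at h0
      refine exists_hole (ranFin γ) hx1' hrel (Or.inr ?_)
      show (γ.1.symm.trans δ.1).symm x = none
      rw [PEquiv.symm_trans_rev, trans_apply', hδx, Option.bind_none]
  have hstep : ∃ (S : Set ι) (hS : Sᶜ.Finite) (y : ι), y ∉ S ∧ c (eIcf S hS) 1 := by
    rw [not_and_or] at hne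
    rcases hne with hdne | hrne
    · have hex : ∃ x, (x ∈ Icf.dom α ∧ x ∉ Icf.dom β) ∨ (x ∈ Icf.dom β ∧ x ∉ Icf.dom α) := by
        by_contra hcon
        push_neg at hcon
        apply hdne
        ext a
        have := hcon a
        tauto
      rcases hex with ⟨x, ⟨h1, h2⟩ | ⟨h1, h2⟩⟩
      · exact main α β hαβ (Or.inl ⟨x, h1, h2⟩)
      · exact main β α (c.symm hαβ) (Or.inl ⟨x, h1, h2⟩)
    · have hex : ∃ x, (x ∈ Icf.ran α ∧ x ∉ Icf.ran β) ∨ (x ∈ Icf.ran β ∧ x ∉ Icf.ran α) := by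
        by_contra hcon
        push_neg at hcon
        apply hrne
        ext a
        have := hcon a
        tauto
      rcases hex with ⟨x, ⟨h1, h2⟩ | ⟨h1, h2⟩⟩
      · exact main α β hαβ (Or.inr ⟨x, h1, h2⟩)
      · exact main β α (c.symm hαβ) (Or.inr ⟨x, h1, h2⟩)
  obtain ⟨S, hS, y, hy, hrel1⟩ := hstep
  have hz : ∀ z : ι, c (eIcf {z}ᶜ (singleton_compl_finite z)) 1 :=
    fun z => hole_anywhere hy hrel1 z
  have hall := all_idem_rel_one hz
  intro q
  induction q using Con.induction_on with
  | H f =>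
    refine ⟨↑(inv' f), ?_, ?_⟩
    · rw [← Con.coe_mul, ← Con.coe_one]
      exact (Con.eq c).2 (by rw [mul_inv' f]; exact hall _ (domFin f))
    · rw [← Con.coe_mul, ← Con.coe_one]
      exact (Con.eq c).2 (by rw [inv'_mul f]; exact hall _ (ranFin f))

end IcfPaper
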